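/- Secrecy of the (3,5) quantum secret sharing code (denial part of Proposition 8): let C5 be the cycle graph on vertices {1,…,5}, and for a unit vector (α,β) ∈ ℂ² let |S⟩ := α|G_{(0,0,0,0,0)}⟩ + β|G_{(1,1,1,1,1)}⟩ ∈ H_5. Then for every subset V' ⊆ {1,…,5} with |V'| = 2, the reduced state is maximally mixed and independent of the secret: Tr_{V∖V'}(|S⟩⟨S|) = Id_4/4 for all unit (α,β). -/

import Mathlib

noncomputable section

open scoped ComplexConjugate

/-- The Hilbert space of qubits indexed by `V`, as functions from bit strings to `ℂ`. -/
abbrev QState (V : Type) : Type := (V → Fin 2) → ℂ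

/-- The diagonal operator with diagonal entries `d`. -/
def diagOp {V : Type} (d : (V → Fin 2) → ℂ) : QState V →ₗ[ℂ] QState V where
  toFun f := fun x => d x * f x
  map_add' f g := by funext x; simp [mul_add]
  map_smul' c f := by funext x; simp [smul_eq_mul]; ring

/-- The Pauli `Z` operator on qubit `i`. -/
def Zop {V : Type} (i : V) : QState V →ₗ[ℂ] QState V :=
  diagOp fun x => (-1 : ℂ) ^ (x i : ℕ)

/-- The Pauli `X` operator on qubit `i` (bit flip). -/
def Xop {V : Type} [DecidableEq V] (i : V) : QState V →ₗ[ℂ] QState V where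
  toFun f := fun x => f (Function.update x i (x i + 1))
  map_add' f g := rfl
  map_smul' c f := rfl

/-- The phase gate `S` on qubit `i`, sending `|x⟩` to `(-i)^(x i) |x⟩`. -/
def Sop {V : Type} (i : V) : QState V →ₗ[ℂ] QState V :=
  diagOp fun x => (-Complex.I) ^ (x i : ℕ)

/-- The Pauli `Y` operator on qubit `i`, `Y = i·X·Z`. -/
def Yop {V : Type} [DecidableEq V] (i : V) : QState V →ₗ[ℂ] QState V :=
  Complex.I • (Xop i ∘ₗ Zop i)

/-- `qVal G x` is the number of edges of `G` both of whose endpoints carry bit 1 in `x`. -/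
def qVal {V : Type} (G : SimpleGraph V) (x : V → Fin 2) : ℕ :=
  Nat.card {e : Sym2 V // e ∈ G.edgeSet ∧ ∀ v ∈ e, x v = 1}

/-- The graph state `|G⟩`, with amplitudes `2^{-n/2} (-1)^{q_G(x)}`. -/
def graphState {V : Type} [Fintype V] (G : SimpleGraph V) : QState V :=
  fun x => (((Real.sqrt 2)⁻¹ ^ Fintype.card V : ℝ) : ℂ) * (-1 : ℂ) ^ qVal G x

/-- The labeled/encoded graph state `|𝒢_ℓ⟩ = (∏_i Z_i^{ℓ_i}) (∏_{j ∈ Vsq} S_j) |G⟩`,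
with square-vertex set `Vsq`. -/
def encSq {V : Type} [Fintype V] (G : SimpleGraph V) (Vsq : Set V) (ℓ : V → Fin 2) : QState V :=
  fun x => (-1 : ℂ) ^ Nat.card {i : V // ℓ i = 1 ∧ x i = 1}
    * (-Complex.I) ^ Nat.card {j : V // j ∈ Vsq ∧ x j = 1}
    * graphState G x

/-- The encoded graph state `|G_ℓ⟩` (no square vertices). -/
def encG {V : Type} [Fintype V] (G : SimpleGraph V) (ℓ : V → Fin 2) : QState V :=
  encSq G ∅ ℓ

open Classical in
/-- The stabilizer operator of vertex `i`: `X_i ∏_{j ∈ N_i} Z_j` for circular vertices,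
`Y_i ∏_{j ∈ N_i} Z_j` for square vertices (`i ∈ Vsq`). -/
def Kop {V : Type} [DecidableEq V] (G : SimpleGraph V) (Vsq : Set V) (i : V) :
    QState V →ₗ[ℂ] QState V :=
  (if i ∈ Vsq then Yop i else Xop i) ∘ₗ
    diagOp fun x => (-1 : ℂ) ^ Nat.card {j : V // G.Adj i j ∧ x j = 1}

/-- Merge a bit string on `P` with a bit string on the complement of `P`. -/
def mergeBits {V : Type} [DecidableEq V] (P : Finset V) (a : {i // i ∈ P} → Fin 2)
    (c : {i // i ∉ P} → Fin 2) : V → Fin 2 :=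
  fun i => if h : i ∈ P then a ⟨i, h⟩ else c ⟨i, h⟩

/-- The reduced density matrix of the pure state `ψ` on the qubits in `P`:
`(a, b) ↦ ∑_c ⟨a⊔c|ψ⟩⟨ψ|b⊔c⟩`. -/
def red {V : Type} [Fintype V] [DecidableEq V] (P : Finset V) (ψ : QState V) :
    ({i // i ∈ P} → Fin 2) → ({i // i ∈ P} → Fin 2) → ℂ :=
  fun a b => ∑ c : {i // i ∉ P} → Fin 2, ψ (mergeBits P a c) * conj (ψ (mergeBits P b c))

/-- The computational basis vector `|y⟩`. -/
def basisVec {V : Type} [Fintype V] [DecidableEq V] (y : V → Fin 2) : QState V :=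
  fun x => if x = y then 1 else 0

/-- The matrix entry `⟨x|A|y⟩` of an operator. -/
def opEntry {V : Type} [Fintype V] [DecidableEq V] (A : QState V →ₗ[ℂ] QState V)
    (x y : V → Fin 2) : ℂ := A (basisVec y) x

/-- `A` acts trivially outside `P`: it equals `M ⊗ Id` for some operator `M` on the
qubits in `P`. -/
def trivialOutside {V : Type} [Fintype V] [DecidableEq V] (P : Finset V)
    (A : QState V →ₗ[ℂ] QState V) : Prop :=
  ∃ M : ({i // i ∈ P} → Fin 2) → ({i // i ∈ P} → Fin 2) → ℂ,
    ∀ a b c c', opEntry A (mergeBits P a c) (mergeBits P b c') = if c = c' then M a b else 0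

/-- The product `∏_{i ∈ T} K_i` of (commuting) operators, taken in sorted order. -/
def prodOps {V : Type} [LinearOrder V] (T : Finset V)
    (K : V → QState V →ₗ[ℂ] QState V) : QState V →ₗ[ℂ] QState V :=
  (T.sort (· ≤ ·)).foldr (fun i acc => K i ∘ₗ acc) LinearMap.id


/-- The cycle graph on `Fin n` (consecutive vertices mod `n` are adjacent). -/
def cycG (n : ℕ) [NeZero n] : SimpleGraph (Fin n) where
  Adj a b := a ≠ b ∧ (b = a + 1 ∨ a = b + 1)
  symm := ⟨by intro a b h; exact ⟨h.1.symm, h.2.symm⟩⟩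
  loopless := ⟨by intro a h; exact h.1 rfl⟩

def q5 (x : Fin 5 → Fin 2) : ℕ := (Finset.univ.filter fun i : Fin 5 => x i = 1 ∧ x (i+1) = 1).card
def w5 (x : Fin 5 → Fin 2) : ℕ := (Finset.univ.filter fun i : Fin 5 => x i = 1).card

lemma qVal_cycG (x : Fin 5 → Fin 2) : qVal (cycG 5) x = q5 x := by
  classical
  have hbij : Function.Bijective
      (fun i : {i : Fin 5 // x i = 1 ∧ x (i+1) = 1} =>
        (⟨s(i.1, i.1 + 1), by
          constructor
          · rw [SimpleGraph.mem_edgeSet]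
            refine ⟨?_, Or.inl rfl⟩
            have : ∀ j : Fin 5, j ≠ j + 1 := by decide
            exact this i.1
          · intro v hv
            rcases Sym2.mem_iff.mp hv with h | h
            · rw [h]; exact i.2.1
            · rw [h]; exact i.2.2⟩ :
          {e : Sym2 (Fin 5) // e ∈ (cycG 5).edgeSet ∧ ∀ v ∈ e, x v = 1})) := by
    constructor
    · rintro ⟨i, hi⟩ ⟨j, hj⟩ h
      simp only [Subtype.mk.injEq, Sym2.eq_iff] at h
      rcases h with ⟨h1, _⟩ | ⟨h1, h2⟩
      · exact Subtype.ext h1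
      · exfalso
        have : ∀ i j : Fin 5, i = j + 1 → i + 1 = j → False := by decide
        exact this i j h1 h2
    · rintro ⟨e, he, hall⟩
      induction e using Sym2.inductionOn with
      | hf u v =>
        rw [SimpleGraph.mem_edgeSet] at he
        rcases he.2 with h | h
        · refine ⟨⟨u, hall u (by simp), ?_⟩, ?_⟩
          · rw [← h]; exact hall v (by simp)
          · simp [← h]
        · refine ⟨⟨v, hall v (by simp), ?_⟩, ?_⟩
          · rw [← h]; exact hall u (by simp)
          · simp only [Subtype.mk.injEq, ← h]
            exact Sym2.eq_swap
  calc qVal (cycG 5) x = Nat.card {i : Fin 5 // x i = 1 ∧ x (i+1) = 1} :=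
        (Nat.card_eq_of_bijective _ hbij).symm
    _ = q5 x := by rw [Nat.card_eq_fintype_card, Fintype.card_subtype]; rfl

lemma encG_zero (x : Fin 5 → Fin 2) :
    encG (cycG 5) (fun _ => (0 : Fin 2)) x
      = (((Real.sqrt 2)⁻¹ ^ 5 : ℝ) : ℂ) * ((-1 : ℤ) ^ q5 x : ℤ) := by
  have h1 : Nat.card {i : Fin 5 // (fun _ => (0:Fin 2)) i = 1 ∧ x i = 1} = 0 := by
    have : IsEmpty {i : Fin 5 // (fun _ => (0:Fin 2)) i = 1 ∧ x i = 1} :=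
      ⟨fun ⟨i, hi⟩ => by simp at hi⟩
    exact Nat.card_of_isEmpty
  have h2 : Nat.card {j : Fin 5 // j ∈ (∅ : Set (Fin 5)) ∧ x j = 1} = 0 := by
    have : IsEmpty {j : Fin 5 // j ∈ (∅ : Set (Fin 5)) ∧ x j = 1} :=
      ⟨fun ⟨j, hj⟩ => hj.1⟩
    exact Nat.card_of_isEmpty
  simp [encG, encSq, h1, h2, graphState, qVal_cycG, Fintype.card_fin]

lemma encG_one (x : Fin 5 → Fin 2) :
    encG (cycG 5) (fun _ => (1 : Fin 2)) x
      = (((Real.sqrt 2)⁻¹ ^ 5 : ℝ) : ℂ) * ((-1 : ℤ) ^ (q5 x + w5 x) : ℤ) := by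
  have h1 : Nat.card {i : Fin 5 // (fun _ => (1:Fin 2)) i = 1 ∧ x i = 1} = w5 x := by
    rw [Nat.card_eq_fintype_card, Fintype.card_subtype]
    congr 1
    apply Finset.filter_congr
    intro i _
    simp
  have h2 : Nat.card {j : Fin 5 // j ∈ (∅ : Set (Fin 5)) ∧ x j = 1} = 0 := by
    have : IsEmpty {j : Fin 5 // j ∈ (∅ : Set (Fin 5)) ∧ x j = 1} :=
      ⟨fun ⟨j, hj⟩ => hj.1⟩
    exact Nat.card_of_isEmpty
  simp [encG, encSq, h1, h2, graphState, qVal_cycG, Fintype.card_fin]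
  rw [show Fintype.card {i : Fin 5 // x i = 1} = w5 x by rw [Fintype.card_subtype]; rfl, pow_add]
  ring

set_option maxHeartbeats 4000000 in
theorem key : ∀ P : Finset (Fin 5), P.card = 2 → ∀ a b : ({i // i ∈ P} → Fin 2),
    ((∑ c : {i // i ∉ P} → Fin 2, ((-1:ℤ))^(q5 (mergeBits P a c) + q5 (mergeBits P b c)))
      = if a = b then 8 else 0)
  ∧ ((∑ c : {i // i ∉ P} → Fin 2, ((-1:ℤ))^(q5 (mergeBits P a c) + q5 (mergeBits P b c) + w5 (mergeBits P b c))) = 0)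
  ∧ ((∑ c : {i // i ∉ P} → Fin 2, ((-1:ℤ))^(q5 (mergeBits P a c) + q5 (mergeBits P b c) + w5 (mergeBits P a c))) = 0)
  ∧ ((∑ c : {i // i ∉ P} → Fin 2, ((-1:ℤ))^(q5 (mergeBits P a c) + q5 (mergeBits P b c) + w5 (mergeBits P a c) + w5 (mergeBits P b c)))
      = if a = b then 8 else 0) := by decide

/-- secrecy of the (3,5) quantum secret sharing code: for the 5-cycle
code state `|S⟩ = α|G_{00000}⟩ + β|G_{11111}⟩` with `(α,β)` a unit vector, the reduced
state of any two players is the maximally mixed state `Id₄/4`, independent of the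
secret. -/
theorem c5_qq_two_players_maximally_mixed (α β : ℂ) (hunit : ‖α‖ ^ 2 + ‖β‖ ^ 2 = 1)
    (P : Finset (Fin 5)) (hP : P.card = 2) :
    red P (α • encG (cycG 5) (fun _ => (0 : Fin 2)) +
           β • encG (cycG 5) fun _ => (1 : Fin 2)) =
      fun a b => if a = b then (1 / 4 : ℂ) else 0 := by
  funext a b
  obtain ⟨k1, k2, k3, k4⟩ := key P hP a b
  have hCC : ((((Real.sqrt 2)⁻¹ ^ 5 : ℝ)) : ℂ) * (((Real.sqrt 2)⁻¹ ^ 5 : ℝ) : ℂ)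
      = 1 / 32 := by
    rw [← Complex.ofReal_mul]
    have h2 : Real.sqrt 2 ^ 2 = 2 := Real.sq_sqrt (by norm_num)
    have : ((Real.sqrt 2)⁻¹ ^ 5 : ℝ) * ((Real.sqrt 2)⁻¹ ^ 5 : ℝ) = ((Real.sqrt 2 ^ 2)⁻¹)^5 := by
      ring
    rw [this, h2]
    norm_num
  have hterm : ∀ c : {i // i ∉ P} → Fin 2,
      (α • encG (cycG 5) (fun _ => (0 : Fin 2)) + β • encG (cycG 5) fun _ => (1 : Fin 2))
          (mergeBits P a c)
        * conj ((α • encG (cycG 5) (fun _ => (0 : Fin 2)) + β • encG (cycG 5) fun _ => (1 : Fin 2))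
          (mergeBits P b c))
      = (1/32 : ℂ) * (α * conj α
            * (((-1:ℤ)^(q5 (mergeBits P a c) + q5 (mergeBits P b c)) : ℤ) : ℂ)
          + α * conj β
            * (((-1:ℤ)^(q5 (mergeBits P a c) + q5 (mergeBits P b c) + w5 (mergeBits P b c)) : ℤ) : ℂ)
          + β * conj α
            * (((-1:ℤ)^(q5 (mergeBits P a c) + q5 (mergeBits P b c) + w5 (mergeBits P a c)) : ℤ) : ℂ)
          + β * conj β
            * (((-1:ℤ)^(q5 (mergeBits P a c) + q5 (mergeBits P b c) + w5 (mergeBits P a c) + w5 (mergeBits P b c)) : ℤ) : ℂ)) := by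
    intro c
    simp only [Pi.add_apply, Pi.smul_apply, smul_eq_mul, encG_zero, encG_one, map_add, map_mul,
      Complex.conj_ofReal, map_intCast]
    rw [← hCC]
    push_cast [pow_add]
    ring
  unfold red
  rw [Finset.sum_congr rfl (fun c _ => hterm c)]
  rw [← Finset.mul_sum]
  simp only [Finset.sum_add_distrib, ← Finset.mul_sum]
  simp only [← Int.cast_sum, k1, k2, k3, k4]
  have habs : α * conj α + β * conj β = 1 := by
    have h1 : Complex.normSq α + Complex.normSq β = 1 := by
      rw [Complex.normSq_eq_norm_sq, Complex.normSq_eq_norm_sq]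
      exact hunit
    rw [Complex.mul_conj, Complex.mul_conj, ← Complex.ofReal_add, h1]
    norm_num
  by_cases h : a = b
  · simp only [h, if_pos rfl, if_true]
    push_cast
    linear_combination (1/4 : ℂ) * habs
  · simp only [if_neg h]
    push_cast
    ring


end
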